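/- Let 0 < β < 1 and define q_m = ∫_{-1}^1 P_m(x)(1-x)^{-β} dx. Then q_0 = 2^{1-β}/(1-β) and q_{m+1} = ((m+β)/(m+2-β)) q_m for every natural number m. -/

import Mathlib

open Polynomial intervalIntegral Filter


lemma iter_deriv_add (k : ℕ) (p q : ℝ[X]) :
    derivative^[k] (p + q) = derivative^[k] p + derivative^[k] q := by
  induction k generalizing p q with
  | zero => rfl
  | succ k ih => rw [Function.iterate_succ_apply, derivative_add, ih,
      Function.iterate_succ_apply, Function.iterate_succ_apply]

lemma iter_deriv_X_mul (k : ℕ) (g : ℝ[X]) :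
    derivative^[k] (X * g) = X * derivative^[k] g + (k : ℝ[X]) * derivative^[k - 1] g := by
  induction k generalizing g with
  | zero => simp
  | succ k ih =>
    rw [Function.iterate_succ_apply, derivative_mul, derivative_X, one_mul,
      iter_deriv_add, ih (derivative g), Function.iterate_succ_apply]
    have h : (k : ℝ[X]) * derivative^[k - 1] (derivative g)
        = (k : ℝ[X]) * derivative^[k] g := by
      cases k with
      | zero => simp
      | succ k => rw [Nat.succ_sub_one, ← Function.iterate_succ_apply]
    rw [h, Nat.add_sub_cancel]
    push_cast
    ring

lemma iter_deriv_X2_mul (k : ℕ) (g : ℝ[X]) :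
    derivative^[k] ((X ^ 2 - 1) * g) = (X ^ 2 - 1) * derivative^[k] g
      + 2 * (k : ℝ[X]) * X * derivative^[k - 1] g
      + ((k : ℝ[X]) * ((k : ℝ[X]) - 1)) * derivative^[k - 2] g := by
  induction k generalizing g with
  | zero => simp
  | succ k ih =>
    have h2x : (2 : ℝ[X]) = C 2 := (map_ofNat C 2).symm
    have hd : derivative (X ^ 2 - 1 : ℝ[X]) = C 2 * X := by
      rw [derivative_sub, derivative_one, derivative_X_pow]
      norm_num
    rw [Function.iterate_succ_apply, derivative_mul, hd, iter_deriv_add,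
      ih (derivative g), mul_assoc (C 2) X g, iterate_derivative_C_mul (2:ℝ),
      iter_deriv_X_mul]
    have e1 : derivative^[k] (derivative g) = derivative^[k+1] g :=
      (Function.iterate_succ_apply derivative (k) g).symm
    have e2 : 2 * (k : ℝ[X]) * X * derivative^[k - 1] (derivative g)
        = 2 * (k : ℝ[X]) * X * derivative^[k] g := by
      cases k with
      | zero => simp
      | succ k => rw [Nat.succ_sub_one, ← Function.iterate_succ_apply]
    have e3 : ((k : ℝ[X]) * ((k : ℝ[X]) - 1)) * derivative^[k - 2] (derivative g)
        = ((k : ℝ[X]) * ((k : ℝ[X]) - 1)) * derivative^[k - 1] g := by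
      match k with
      | 0 => simp
      | 1 => norm_num
      | (k+2) =>
        rw [show k + 2 - 2 = k from rfl, show k + 2 - 1 = k + 1 from rfl,
          ← Function.iterate_succ_apply]
    rw [← h2x] at *
    rw [e1, e2, e3, Nat.add_sub_cancel, show k + 1 - 2 = k - 1 from rfl]
    push_cast
    ring

noncomputable def RR (n : ℕ) : ℝ[X] := derivative^[n] ((X ^ 2 - 1) ^ n)
noncomputable def SS (n : ℕ) : ℝ[X] := derivative^[n - 1] ((X ^ 2 - 1) ^ n)

lemma hderpow (n : ℕ) :
    derivative ((X ^ 2 - 1) ^ (n + 1) : ℝ[X]) = C ((2:ℝ) * (n+1)) * (X * (X ^ 2 - 1) ^ n) := by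
  rw [derivative_pow]
  have : derivative (X ^ 2 - 1 : ℝ[X]) = C 2 * X := by
    rw [derivative_sub, derivative_one, derivative_X_pow]; norm_num
  rw [this, Nat.add_sub_cancel]
  push_cast [map_mul, map_ofNat, map_natCast]
  ring

lemma E1 (n : ℕ) :
    RR (n+1) = C ((2:ℝ) * (n+1)) * (X * RR n + (n : ℝ[X]) * SS n) := by
  have : RR (n+1) = derivative^[n] (derivative ((X ^ 2 - 1) ^ (n+1))) :=
    Function.iterate_succ_apply derivative n _
  rw [this, hderpow, iterate_derivative_C_mul, iter_deriv_X_mul]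
  rfl

lemma E2 (n : ℕ) :
    (X ^ 2 - 1) * derivative (RR n) = C ((n:ℝ) * ((n:ℝ)+1)) * SS n := by
  have hA : (X ^ 2 - 1 : ℝ[X]) * derivative ((X ^ 2 - 1) ^ n)
      = C ((2:ℝ) * n) * (X * (X ^ 2 - 1) ^ n) := by
    cases n with
    | zero => simp
    | succ m =>
      rw [hderpow]
      have : ((X:ℝ[X]) ^ 2 - 1) ^ (m+1) = (X ^ 2 - 1) ^ m * (X ^ 2 - 1) := pow_succ _ _
      push_cast [map_mul, map_ofNat, map_natCast]
      ring_nf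
  have := congrArg (derivative^[n]) hA
  rw [iter_deriv_X2_mul, iterate_derivative_C_mul, iter_deriv_X_mul] at this
  have e1 : derivative^[n] (derivative ((X ^ 2 - 1) ^ n)) = derivative (RR n) := by
    rw [← Function.iterate_succ_apply, Function.iterate_succ_apply']; rfl
  have e2 : (2:ℝ[X]) * (n:ℝ[X]) * X * derivative^[n - 1] (derivative ((X ^ 2 - 1) ^ n))
      = 2 * (n:ℝ[X]) * X * RR n := by
    cases n with
    | zero => simp
    | succ m => rw [Nat.succ_sub_one, ← Function.iterate_succ_apply]; rfl
  have e3 : ((n:ℝ[X]) * ((n:ℝ[X]) - 1)) * derivative^[n - 2] (derivative ((X ^ 2 - 1) ^ n))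
      = ((n:ℝ[X]) * ((n:ℝ[X]) - 1)) * SS n := by
    match n with
    | 0 => simp
    | 1 => norm_num
    | (m+2) =>
      rw [show m + 2 - 2 = m from rfl, ← Function.iterate_succ_apply]; rfl
  rw [e1, e2, e3] at this
  have hSS : derivative^[n-1] ((X ^ 2 - 1) ^ n) = SS n := rfl
  have hRR : derivative^[n] ((X ^ 2 - 1) ^ n) = RR n := rfl
  rw [hSS, hRR] at this
  push_cast [map_mul, map_natCast, map_ofNat, map_add, map_one] at this ⊢
  linear_combination this


lemma E3 (n : ℕ) :
    RR (n+1) = C ((2:ℝ) * (n+1)) * (X * RR n) + C 2 * ((X ^ 2 - 1) * derivative (RR n)) := by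
  rw [E1, E2]
  push_cast [map_mul, map_natCast, map_ofNat, map_add, map_one]
  ring

lemma F2 (n : ℕ) :
    derivative (RR (n+1)) = C ((2:ℝ) * (n+1)) * (X * derivative (RR n) + C ((n:ℝ)+1) * RR n) := by
  have h0 : derivative (RR (n+1)) = derivative^[n+1] (derivative ((X ^ 2 - 1) ^ (n+1))) := by
    rw [← Function.iterate_succ_apply, Function.iterate_succ_apply']; rfl
  rw [h0, hderpow, iterate_derivative_C_mul, iter_deriv_X_mul, Nat.add_sub_cancel]
  have h1 : derivative^[n+1] ((X ^ 2 - 1) ^ n) = derivative (RR n) := by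
    rw [Function.iterate_succ_apply']; rfl
  have h2 : derivative^[n] ((X ^ 2 - 1) ^ n) = RR n := rfl
  rw [h1, h2]
  push_cast [map_mul, map_natCast, map_ofNat, map_add, map_one]
  ring

/-- Legendre polynomial of degree `n` on `[-1,1]`, normalized so `P n 1 = 1`
(Rodrigues' formula). -/
noncomputable def legendrePoly (n : ℕ) : Polynomial ℝ :=
  C ((2 ^ n * n.factorial : ℝ))⁻¹ * derivative^[n] ((X ^ 2 - 1) ^ n)

/-- Pointwise Legendre polynomial. -/
noncomputable def P (n : ℕ) (x : ℝ) : ℝ := (legendrePoly n).eval x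

/-- First derivative of the Legendre polynomial. -/
noncomputable def P' (n : ℕ) (x : ℝ) : ℝ := ((legendrePoly n).derivative).eval x

/-- Second derivative of the Legendre polynomial. -/
noncomputable def P'' (n : ℕ) (x : ℝ) : ℝ := ((legendrePoly n).derivative.derivative).eval x

lemma K0_ne (n : ℕ) : ((2:ℝ) ^ n * n.factorial) ≠ 0 := by
  positivity

lemma hL (n : ℕ) : C ((2:ℝ) ^ n * n.factorial) * legendrePoly n = RR n := by
  rw [legendrePoly, ← mul_assoc, ← C_mul, mul_inv_cancel₀ (K0_ne n), C_1, one_mul]; rfl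

lemma hL' (n : ℕ) :
    C ((2:ℝ) ^ n * n.factorial) * derivative (legendrePoly n) = derivative (RR n) := by
  rw [← derivative_C_mul, hL]

lemma hK (n : ℕ) : C ((2:ℝ) ^ (n+1) * (n+1).factorial)
    = C ((2:ℝ) * ((n:ℝ)+1)) * C ((2:ℝ) ^ n * n.factorial) := by
  rw [← C_mul]
  congr 1
  rw [Nat.factorial_succ]
  push_cast
  ring

lemma h6 (n : ℕ) : C ((2:ℝ) * ((n:ℝ)+1)) = C 2 * C ((n:ℝ)+1) := by rw [← C_mul]

lemma CK_ne (n : ℕ) : (C ((2:ℝ) ^ n * n.factorial) : ℝ[X]) ≠ 0 := by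
  simpa using K0_ne n

lemma G1 (n : ℕ) :
    C ((n:ℝ)+1) * legendrePoly (n+1)
      = C ((n:ℝ)+1) * X * legendrePoly n + (X ^ 2 - 1) * derivative (legendrePoly n) := by
  apply mul_left_cancel₀ (CK_ne (n+1))
  rw [mul_left_comm, hL, E3, hK, h6, ← hL' n, ← hL n]
  ring

lemma G2 (n : ℕ) :
    derivative (legendrePoly (n+1))
      = X * derivative (legendrePoly n) + C ((n:ℝ)+1) * legendrePoly n := by
  apply mul_left_cancel₀ (CK_ne (n+1))
  rw [hL', F2, hK, h6, ← hL' n, ← hL n]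
  ring

lemma G3 (n : ℕ) :
    (X ^ 2 - 1) * derivative (legendrePoly (n+1))
      = C ((n:ℝ)+1) * (X * legendrePoly (n+1) - legendrePoly n) := by
  linear_combination (X^2-1 : ℝ[X]) * G2 n - (X:ℝ[X]) * G1 n

lemma cast_succ_C (n : ℕ) : (C ((↑(n+1):ℝ)+1) : ℝ[X]) = C ((n:ℝ)+2) := by push_cast; ring_nf

lemma C_split (n : ℕ) : (C (2*(n:ℝ)+3) : ℝ[X]) = C ((n:ℝ)+2) + C ((n:ℝ)+1) := by
  rw [← C_add]; ring_nf

lemma bonnet (n : ℕ) :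
    C ((n:ℝ)+2) * legendrePoly (n+2) =
      C (2*(n:ℝ)+3) * X * legendrePoly (n+1) - C ((n:ℝ)+1) * legendrePoly n := by
  have h1 := G1 (n+1)
  rw [cast_succ_C] at h1
  rw [C_split]
  linear_combination h1 + G3 n

lemma derivRec (n : ℕ) :
    derivative (legendrePoly (n+2)) - derivative (legendrePoly n)
      = C (2*(n:ℝ)+3) * legendrePoly (n+1) := by
  have h2 := G2 (n+1)
  rw [cast_succ_C] at h2
  rw [C_split]
  linear_combination h2 + (X:ℝ[X]) * G2 n - G1 n

lemma legendre_zero : legendrePoly 0 = 1 := by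
  simp [legendrePoly]

lemma legendre_one : legendrePoly 1 = X := by
  have : derivative ((X^2 - 1 : ℝ[X])^1) = C 2 * X := by
    rw [pow_one, derivative_sub, derivative_one, derivative_X_pow]; norm_num
  rw [legendrePoly]
  simp only [Function.iterate_one, this]
  rw [← mul_assoc, ← C_mul]
  norm_num

lemma legendre_eval_neg_one (n : ℕ) : (legendrePoly n).eval (-1) = (-1) ^ n := by
  induction n using Nat.twoStepInduction with
  | zero => simp [legendre_zero]
  | one => simp [legendre_one]
  | more n ih ih2 =>
    have h := congrArg (fun p : ℝ[X] => p.eval (-1)) (bonnet n)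
    simp only [eval_mul, eval_sub, eval_C, eval_X] at h
    rw [ih, ih2] at h
    have hne : ((n:ℝ)+2) ≠ 0 := by positivity
    have : ((n:ℝ)+2) * (legendrePoly (n+2)).eval (-1) = ((n:ℝ)+2) * (-1)^(n+2) := by
      rw [h]; ring
    exact mul_left_cancel₀ hne this

open MeasureTheory Set

lemma wInt {c : ℝ} (hc : -1 < c) :
    IntervalIntegrable (fun x => (1 - x) ^ c) volume (-1 : ℝ) 1 := by
  have h := (intervalIntegral.intervalIntegrable_rpow' (a := 2) (b := 0) hc).comp_sub_left 1
  norm_num at h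
  exact h

lemma pwInt (p : ℝ[X]) {c : ℝ} (hc : -1 < c) :
    IntervalIntegrable (fun x => p.eval x * (1 - x) ^ c) volume (-1 : ℝ) 1 :=
  (wInt hc).continuousOn_mul (p.continuous_aeval.continuousOn)

lemma contW {c : ℝ} (hc : 0 < c) : ContinuousOn (fun x : ℝ => (1 - x) ^ c) (Icc (-1) 1) := by
  intro x _
  apply ContinuousWithinAt.rpow_const
  · exact (continuous_const.sub continuous_id).continuousWithinAt
  · exact Or.inr hc.le

lemma ftc_key (p : ℝ[X]) {c : ℝ} (hc : 0 < c) :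
    ∫ x in (-1:ℝ)..1, p.derivative.eval x * (1 - x) ^ c
      = c * (∫ x in (-1:ℝ)..1, p.eval x * (1 - x) ^ (c - 1)) - p.eval (-1) * 2 ^ c := by
  have hc1 : (-1:ℝ) < c := by linarith
  have hc2 : (-1:ℝ) < c - 1 := by linarith
  set f : ℝ → ℝ := fun x => p.eval x * (1 - x) ^ c with hf
  set g : ℝ → ℝ := fun x => p.derivative.eval x * (1 - x) ^ c
      - c * (p.eval x * (1 - x) ^ (c - 1)) with hg
  have hcont : ContinuousOn f (Icc (-1) 1) :=
    (p.continuous_aeval.continuousOn).mul (contW hc)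
  have hderiv : ∀ x ∈ Ioo (-1:ℝ) 1, HasDerivWithinAt f (g x) (Ioi x) x := by
    intro x hx
    have hx1 : (1:ℝ) - x ≠ 0 := by have := hx.2; intro h; linarith [sub_eq_zero.mp h]
    have h0 : HasDerivAt (fun y : ℝ => 1 - y) (-1) x := by
      simpa using (hasDerivAt_id x).const_sub 1
    have h1 : HasDerivAt (fun y : ℝ => (1 - y) ^ c) (c * (1 - x) ^ (c - 1) * (-1)) x :=
      (Real.hasDerivAt_rpow_const (Or.inl hx1)).comp x h0
    have h2 : HasDerivAt (fun y => p.eval y) (p.derivative.eval x) x := p.hasDerivAt x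
    have h3 := h2.mul h1
    have : g x = p.derivative.eval x * (1 - x) ^ c
        + p.eval x * (c * (1 - x) ^ (c - 1) * (-1)) := by rw [hg]; ring
    rw [this]
    exact h3.hasDerivWithinAt
  have hi1 : IntervalIntegrable (fun x => p.derivative.eval x * (1 - x) ^ c)
      volume (-1:ℝ) 1 := pwInt _ hc1
  have hi2 : IntervalIntegrable (fun x => p.eval x * (1 - x) ^ (c - 1))
      volume (-1:ℝ) 1 := pwInt _ hc2
  have hint : IntervalIntegrable g volume (-1:ℝ) 1 := hi1.sub (hi2.const_mul c)
  have hftc := intervalIntegral.integral_eq_sub_of_hasDeriv_right_of_le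
    (by norm_num : (-1:ℝ) ≤ 1) hcont hderiv hint
  have hsplit : ∫ x in (-1:ℝ)..1, g x
      = (∫ x in (-1:ℝ)..1, p.derivative.eval x * (1 - x) ^ c)
        - c * ∫ x in (-1:ℝ)..1, p.eval x * (1 - x) ^ (c - 1) := by
    rw [hg]
    rw [intervalIntegral.integral_sub hi1 (hi2.const_mul c),
      intervalIntegral.integral_const_mul]
  have hf1 : f 1 = 0 := by
    simp only [hf]
    rw [sub_self, Real.zero_rpow hc.ne', mul_zero]
  have hfm1 : f (-1) = p.eval (-1) * 2 ^ c := by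
    simp only [hf]
    norm_num
  rw [hsplit, hf1, hfm1, zero_sub] at hftc
  linarith

lemma base_int {c : ℝ} (hc : 0 < c) :
    ∫ x in (-1:ℝ)..1, (1 - x) ^ (c - 1) = 2 ^ c / c := by
  have h := intervalIntegral.integral_comp_sub_left (a := (-1:ℝ)) (b := 1)
    (fun y => y ^ (c - 1)) 1
  norm_num at h
  rw [h, integral_rpow (Or.inl (by linarith))]
  rw [sub_add_cancel, Real.zero_rpow hc.ne', sub_zero]

lemma integrable_P (β : ℝ) (hβ : -1 < -β) (p : ℝ[X]) :
    IntervalIntegrable (fun x => p.eval x * (1 - x) ^ (-β)) volume (-1:ℝ) 1 :=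
  pwInt p hβ

lemma xsplit_int (β : ℝ) (hβ0 : 0 < β) (hβ1 : β < 1) (k : ℕ) :
    ∫ x in (-1:ℝ)..1, x * P k x * (1 - x) ^ (-β)
      = (∫ x in (-1:ℝ)..1, P k x * (1 - x) ^ (-β))
        - ∫ x in (-1:ℝ)..1, P k x * (1 - x) ^ (1 - β) := by
  have heq : Set.EqOn (fun x => x * P k x * (1 - x) ^ (-β))
      (fun x => P k x * (1 - x) ^ (-β) - P k x * (1 - x) ^ (1 - β))
      (Set.uIcc (-1:ℝ) 1) := by
    intro x hx
    rw [Set.uIcc_of_le (by norm_num : (-1:ℝ) ≤ 1)] at hx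
    rcases lt_or_eq_of_le hx.2 with h | h
    · have hpos : 0 < 1 - x := by linarith
      have : (1 - x) ^ (1 - β) = (1 - x) ^ (1:ℝ) * (1 - x) ^ (-β) := by
        rw [← Real.rpow_add hpos, show (1:ℝ) + -β = 1 - β by ring]
      simp only
      rw [this, Real.rpow_one]
      ring
    · simp only [h, sub_self]
      rw [Real.zero_rpow (by linarith : -β ≠ 0), Real.zero_rpow (by linarith : 1 - β ≠ 0)]
      ring
  rw [intervalIntegral.integral_congr heq]
  simp only [P]
  rw [intervalIntegral.integral_sub (pwInt (legendrePoly k) (by linarith))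
    (pwInt (legendrePoly k) (by linarith))]

lemma rrel (β : ℝ) (hβ0 : 0 < β) (hβ1 : β < 1) (n : ℕ) :
    (2 * (n:ℝ) + 3) * ∫ x in (-1:ℝ)..1, P (n+1) x * (1 - x) ^ (1 - β)
      = (1 - β) * ((∫ x in (-1:ℝ)..1, P (n+2) x * (1 - x) ^ (-β))
        - ∫ x in (-1:ℝ)..1, P n x * (1 - x) ^ (-β)) := by
  have hc : (0:ℝ) < 1 - β := by linarith
  have h := ftc_key (legendrePoly (n+2) - legendrePoly n) hc
  have hd : (legendrePoly (n+2) - legendrePoly n).derivative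
      = C (2*(n:ℝ)+3) * legendrePoly (n+1) := by
    rw [derivative_sub, derivRec]
  have hev : (legendrePoly (n+2) - legendrePoly n).eval (-1) = 0 := by
    rw [eval_sub, legendre_eval_neg_one, legendre_eval_neg_one, pow_add]
    norm_num
  rw [hd, hev, zero_mul, sub_zero] at h
  have hL : ∫ x in (-1:ℝ)..1, (C (2*(n:ℝ)+3) * legendrePoly (n+1)).eval x * (1 - x) ^ (1 - β)
      = (2 * (n:ℝ) + 3) * ∫ x in (-1:ℝ)..1, P (n+1) x * (1 - x) ^ (1 - β) := by
    rw [← intervalIntegral.integral_const_mul]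
    congr 1; funext x; rw [eval_mul, eval_C, P]; ring
  have hR : ∫ x in (-1:ℝ)..1, (legendrePoly (n+2) - legendrePoly n).eval x * (1 - x) ^ (1 - β - 1)
      = (∫ x in (-1:ℝ)..1, P (n+2) x * (1 - x) ^ (-β))
        - ∫ x in (-1:ℝ)..1, P n x * (1 - x) ^ (-β) := by
    have he : (1:ℝ) - β - 1 = -β := by ring
    rw [he]
    simp only [P]
    rw [← intervalIntegral.integral_sub (pwInt (legendrePoly (n+2)) (by linarith : (-1:ℝ) < -β))
      (pwInt (legendrePoly n) (by linarith : (-1:ℝ) < -β))]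
    congr 1; funext x; rw [eval_sub]; ring
  rw [hL, hR] at h
  exact h

lemma bonnetInt (β : ℝ) (hβ0 : 0 < β) (hβ1 : β < 1) (n : ℕ) :
    ((n:ℝ) + 2) * ∫ x in (-1:ℝ)..1, P (n+2) x * (1 - x) ^ (-β)
      = (2*(n:ℝ)+3) * (∫ x in (-1:ℝ)..1, x * P (n+1) x * (1 - x) ^ (-β))
        - ((n:ℝ)+1) * ∫ x in (-1:ℝ)..1, P n x * (1 - x) ^ (-β) := by
  have hβ : (-1:ℝ) < -β := by linarith
  have h1 : IntervalIntegrable (fun x => (2*(n:ℝ)+3) * (x * P (n+1) x) * (1 - x) ^ (-β))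
      volume (-1:ℝ) 1 := by
    have := pwInt (C (2*(n:ℝ)+3) * X * legendrePoly (n+1)) hβ
    simpa [eval_mul, P, mul_assoc, mul_comm, mul_left_comm] using this
  have h2 : IntervalIntegrable (fun x => ((n:ℝ)+1) * P n x * (1 - x) ^ (-β))
      volume (-1:ℝ) 1 := by
    have := pwInt (C ((n:ℝ)+1) * legendrePoly n) hβ
    simpa [eval_mul, P, mul_assoc, mul_comm, mul_left_comm] using this
  have hpt : ∀ x : ℝ, ((n:ℝ)+2) * P (n+2) x * (1 - x) ^ (-β)
      = (2*(n:ℝ)+3) * (x * P (n+1) x) * (1 - x) ^ (-β)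
        - ((n:ℝ)+1) * P n x * (1 - x) ^ (-β) := by
    intro x
    have hb := congrArg (fun p : ℝ[X] => p.eval x) (bonnet n)
    simp only [eval_mul, eval_sub, eval_C, eval_X] at hb
    simp only [P]
    linear_combination ((1 - x) ^ (-β)) * hb
  calc ((n:ℝ) + 2) * ∫ x in (-1:ℝ)..1, P (n+2) x * (1 - x) ^ (-β)
      = ∫ x in (-1:ℝ)..1, ((n:ℝ)+2) * P (n+2) x * (1 - x) ^ (-β) := by
        rw [← intervalIntegral.integral_const_mul]; congr 1; funext x; ring
    _ = ∫ x in (-1:ℝ)..1, ((2*(n:ℝ)+3) * (x * P (n+1) x) * (1 - x) ^ (-β)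
          - ((n:ℝ)+1) * P n x * (1 - x) ^ (-β)) := by
        congr 1; funext x; exact hpt x
    _ = (∫ x in (-1:ℝ)..1, (2*(n:ℝ)+3) * (x * P (n+1) x) * (1 - x) ^ (-β))
          - ∫ x in (-1:ℝ)..1, ((n:ℝ)+1) * P n x * (1 - x) ^ (-β) :=
        intervalIntegral.integral_sub h1 h2
    _ = (2*(n:ℝ)+3) * (∫ x in (-1:ℝ)..1, x * P (n+1) x * (1 - x) ^ (-β))
          - ((n:ℝ)+1) * ∫ x in (-1:ℝ)..1, P n x * (1 - x) ^ (-β) := by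
        rw [← intervalIntegral.integral_const_mul, ← intervalIntegral.integral_const_mul]
        congr 1
        · congr 1; funext x; ring
        · congr 1; funext x; ring

theorem integral_legendre_right_weight_recurrence (β : ℝ) (hβ0 : 0 < β) (hβ1 : β < 1)
    (q : ℕ → ℝ) (hq : ∀ m, q m = ∫ x in (-1 : ℝ)..1, P m x * (1 - x) ^ (-β)) :
    q 0 = 2 ^ (1 - β) / (1 - β) ∧
    ∀ m : ℕ, q (m + 1) = ((m + β) / (m + 2 - β)) * q m := by
  have h1β : (0:ℝ) < 1 - β := by linarith
  have h2β : (0:ℝ) < 2 - β := by linarith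
  have hq0 : q 0 = 2 ^ (1 - β) / (1 - β) := by
    rw [hq 0]
    simp only [P, legendre_zero, eval_one, one_mul]
    rw [show -β = (1 - β) - 1 by ring]
    exact base_int h1β
  refine ⟨hq0, ?_⟩
  have h3 : ∀ n : ℕ, ((n:ℝ) + 3 - β) * q (n+2)
      = (2*(n:ℝ)+3) * q (n+1) - ((n:ℝ) + β) * q n := by
    intro n
    have hb := bonnetInt β hβ0 hβ1 n
    have hx := xsplit_int β hβ0 hβ1 (n+1)
    have hr := rrel β hβ0 hβ1 n
    rw [hq (n+2), hq (n+1), hq n]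
    linear_combination hb + (2*(n:ℝ)+3) * hx - hr
  have hbase : q 1 = ((0:ℕ) + β) / ((0:ℕ) + 2 - β) * q 0 := by
    have hx := xsplit_int β hβ0 hβ1 0
    simp only [P, legendre_zero, eval_one, mul_one, one_mul] at hx
    have hq1 : q 1 = ∫ x in (-1:ℝ)..1, x * (1 - x) ^ (-β) := by
      rw [hq 1]
      congr 1; funext x
      simp [P, legendre_one]
    have hb2 : ∫ x in (-1:ℝ)..1, (1 - x) ^ (1 - β) = 2 ^ (2-β) / (2-β) := by
      rw [show (1:ℝ) - β = (2 - β) - 1 by ring]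
      exact base_int h2β
    have hpow : (2:ℝ) ^ (2-β) = 2 * 2 ^ (1-β) := by
      rw [show (2:ℝ) - β = 1 + (1 - β) by ring, Real.rpow_add (by norm_num), Real.rpow_one]
    have hq00 : ∫ x in (-1:ℝ)..1, (1 - x) ^ (-β) = 2 ^ (1 - β) / (1 - β) := by
      rw [show -β = (1 - β) - 1 by ring]
      exact base_int h1β
    rw [hq1, hx, hq00, hb2, hpow, hq0]
    push_cast
    field_simp [h2β.ne', h1β.ne']
    try ring
  intro m
  induction m with
  | zero => exact_mod_cast hbase
  | succ k ih =>
    have hden : ((k:ℝ) + 1 + 2 - β) ≠ 0 := by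
      have : (0:ℝ) ≤ (k:ℝ) := Nat.cast_nonneg k
      intro h; nlinarith
    have hden2 : ((k:ℝ) + 2 - β) ≠ 0 := by
      have : (0:ℝ) ≤ (k:ℝ) := Nat.cast_nonneg k
      intro h; nlinarith
    have e : ((k:ℝ) + β) * q k = ((k:ℝ) + 2 - β) * q (k+1) := by
      rw [ih]
      field_simp
      try ring
    have h := h3 k
    push_cast
    rw [div_mul_eq_mul_div, eq_div_iff hden]
    linear_combination h - e
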